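/- (Tensor property) For positive definite matrices ρ, σ on ℂ^n, a positive definite matrix τ on ℂ^m, and α ∈ (0,1) ∪ (1,∞), one has tr(((σ⊗τ)^{(1−α)/(2α)} (ρ⊗τ) (σ⊗τ)^{(1−α)/(2α)})^α) = tr((σ^{(1−α)/(2α)} ρ σ^{(1−α)/(2α)})^α) · tr(τ). -/

import Mathlib

open Matrix ComplexOrder

/-- Functional calculus for Hermitian matrices: apply `f` to the eigenvalues. -/
noncomputable def mfun {m : Type*} [Fintype m] [DecidableEq m] (f : ℝ → ℝ)
    (A : Matrix m m ℂ) : Matrix m m ℂ :=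
  if hA : A.IsHermitian then
    (hA.eigenvectorUnitary : Matrix m m ℂ) *
      Matrix.diagonal (fun i => (f (hA.eigenvalues i) : ℂ)) *
      (star (hA.eigenvectorUnitary : Matrix m m ℂ))
  else 0

/-- Real matrix power via the functional calculus. -/
noncomputable def mpow {m : Type*} [Fintype m] [DecidableEq m]
    (A : Matrix m m ℂ) (p : ℝ) : Matrix m m ℂ :=
  mfun (fun x => x ^ p) A

open Polynomial
section Lemmas

variable {k : Type*} [Fintype k] [DecidableEq k]

lemma mul_star_self' (U : Matrix.unitaryGroup k ℂ) :
    (U : Matrix k k ℂ) * star (U : Matrix k k ℂ) = 1 :=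
  Matrix.mem_unitaryGroup_iff.mp U.2

lemma star_mul_self' (U : Matrix.unitaryGroup k ℂ) :
    star (U : Matrix k k ℂ) * (U : Matrix k k ℂ) = 1 :=
  Matrix.mem_unitaryGroup_iff'.mp U.2

lemma ucancel (U : Matrix.unitaryGroup k ℂ) (X : Matrix k k ℂ) :
    star (U : Matrix k k ℂ) * ((U : Matrix k k ℂ) * X) = X := by
  rw [← mul_assoc, star_mul_self', one_mul]

lemma uconj_pow (U : Matrix.unitaryGroup k ℂ) (D : Matrix k k ℂ) (n : ℕ) :
    ((U : Matrix k k ℂ) * D * star (U : Matrix k k ℂ)) ^ n =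
      (U : Matrix k k ℂ) * D ^ n * star (U : Matrix k k ℂ) := by
  induction n with
  | zero => simp [mul_star_self' U]
  | succ n ih =>
      rw [pow_succ, ih, pow_succ]
      simp only [mul_assoc, ucancel]

lemma uconj_aeval (U : Matrix.unitaryGroup k ℂ) (c : k → ℂ) (P : ℂ[X]) :
    (aeval ((U : Matrix k k ℂ) * Matrix.diagonal c * star (U : Matrix k k ℂ))) P =
      (U : Matrix k k ℂ) * Matrix.diagonal (fun i => P.eval (c i)) * star (U : Matrix k k ℂ) := by
  induction P using Polynomial.induction_on' with
  | add p q hp hq =>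
      have h1 : (fun i => (p + q).eval (c i)) =
          fun i => p.eval (c i) + q.eval (c i) := funext fun i => by simp
      rw [map_add, hp, hq, h1, ← Matrix.diagonal_add, mul_add, add_mul]
  | monomial n a =>
      have h1 : (fun i => ((monomial n a).eval (c i))) = a • (c ^ n) :=
        funext fun i => by simp [eval_monomial, mul_comm]
      rw [aeval_monomial, uconj_pow, Matrix.diagonal_pow, h1, Matrix.diagonal_smul,
        Algebra.algebraMap_eq_smul_one, smul_mul_assoc, one_mul, Matrix.mul_smul,
        Matrix.smul_mul]

lemma mfun_eq {A : Matrix k k ℂ} (hA : A.IsHermitian) (f : ℝ → ℝ) :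
    mfun f A = (hA.eigenvectorUnitary : Matrix k k ℂ) *
      Matrix.diagonal (fun i => (f (hA.eigenvalues i) : ℂ)) *
      (star (hA.eigenvectorUnitary : Matrix k k ℂ)) :=
  dif_pos hA

lemma spectral {A : Matrix k k ℂ} (hA : A.IsHermitian) :
    A = (hA.eigenvectorUnitary : Matrix k k ℂ) *
      Matrix.diagonal (fun i => ((hA.eigenvalues i : ℝ) : ℂ)) *
      star (hA.eigenvectorUnitary : Matrix k k ℂ) := hA.spectral_theorem

/-- Key independence lemma: the functional calculus can be computed with any
unitary diagonalization with real diagonal. -/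
lemma mfun_conj (f : ℝ → ℝ) {A : Matrix k k ℂ} (hA : A.IsHermitian)
    (U : Matrix.unitaryGroup k ℂ) (d : k → ℝ)
    (hAU : A = (U : Matrix k k ℂ) * Matrix.diagonal (fun i => (d i : ℂ)) *
      star (U : Matrix k k ℂ)) :
    mfun f A = (U : Matrix k k ℂ) * Matrix.diagonal (fun i => (f (d i) : ℂ)) *
      star (U : Matrix k k ℂ) := by
  classical
  set s : Finset ℂ := (Finset.univ.image fun i => ((hA.eigenvalues i : ℝ) : ℂ)) ∪
      (Finset.univ.image fun i => ((d i : ℝ) : ℂ)) with hs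
  set P : ℂ[X] := Lagrange.interpolate s id (fun z => (f z.re : ℂ)) with hP
  have hinj : Set.InjOn id (s : Set ℂ) := Function.injective_id.injOn
  have hnode : ∀ z ∈ s, P.eval z = (f z.re : ℂ) := fun z hz => by
    simpa [hP] using Lagrange.eval_interpolate_at_node (r := fun z => (f z.re : ℂ)) hinj hz
  have heig : (fun i => P.eval ((hA.eigenvalues i : ℝ) : ℂ)) =
      fun i => ((f (hA.eigenvalues i) : ℝ) : ℂ) := by
    funext i
    rw [hnode _ (Finset.mem_union_left _ (Finset.mem_image_of_mem _ (Finset.mem_univ i)))]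
    simp
  have hd : (fun i => P.eval ((d i : ℝ) : ℂ)) = fun i => ((f (d i) : ℝ) : ℂ) := by
    funext i
    rw [hnode _ (Finset.mem_union_right _ (Finset.mem_image_of_mem _ (Finset.mem_univ i)))]
    simp
  have key : (aeval A) P = mfun f A := by
    conv_lhs => rw [spectral hA]
    rw [uconj_aeval, mfun_eq hA f, heig]
  rw [← key]
  conv_lhs => rw [hAU]
  rw [uconj_aeval, hd]

lemma uconj_isHermitian (U : Matrix.unitaryGroup k ℂ) (d : k → ℝ) :
    ((U : Matrix k k ℂ) * Matrix.diagonal (fun i => (d i : ℂ)) *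
      star (U : Matrix k k ℂ)).IsHermitian := by
  have hdiag : (Matrix.diagonal fun i => ((d i : ℝ) : ℂ)).IsHermitian := by
    apply Matrix.isHermitian_diagonal_iff.mpr
    intro i; exact Complex.conj_ofReal (d i)
  unfold Matrix.IsHermitian
  rw [Matrix.star_eq_conjTranspose, Matrix.conjTranspose_mul, Matrix.conjTranspose_mul,
    Matrix.conjTranspose_conjTranspose, hdiag.eq, ← Matrix.star_eq_conjTranspose, mul_assoc]

lemma conj_posDef {A : Matrix k k ℂ} (hA : A.PosDef) (B : Matrix k k ℂ) (hB : IsUnit B) :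
    (Bᴴ * A * B).PosDef := by
  refine Matrix.PosDef.of_dotProduct_mulVec_pos (Matrix.isHermitian_conjTranspose_mul_mul B hA.1) fun x hx => ?_
  have hBx : B *ᵥ x ≠ 0 := fun h => hx <| by
    have := Matrix.mulVec_injective_iff_isUnit.mpr hB
    apply this; simpa using h
  simpa only [Matrix.star_mulVec, Matrix.dotProduct_mulVec, Matrix.vecMul_vecMul] using
    hA.dotProduct_mulVec_pos hBx

lemma uconj_posDef (U : Matrix.unitaryGroup k ℂ) (d : k → ℝ) (hd : ∀ i, 0 < d i) :
    ((U : Matrix k k ℂ) * Matrix.diagonal (fun i => (d i : ℂ)) *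
      star (U : Matrix k k ℂ)).PosDef := by
  have hdiag : (Matrix.diagonal fun i => ((d i : ℝ) : ℂ)).PosDef := by
    rw [Matrix.posDef_diagonal_iff]
    intro i
    exact_mod_cast hd i
  have hU : IsUnit (star (U : Matrix k k ℂ)) :=
    ((Matrix.isUnit_iff_isUnit_det _).2 (Matrix.UnitaryGroup.det_isUnit U)).star
  have := conj_posDef hdiag (star (U : Matrix k k ℂ)) hU
  simpa [Matrix.star_eq_conjTranspose, Matrix.conjTranspose_conjTranspose] using this

lemma mpow_conj {A : Matrix k k ℂ} (hA : A.IsHermitian)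
    (U : Matrix.unitaryGroup k ℂ) (d : k → ℝ)
    (hAU : A = (U : Matrix k k ℂ) * Matrix.diagonal (fun i => (d i : ℂ)) *
      star (U : Matrix k k ℂ)) (p : ℝ) :
    mpow A p = (U : Matrix k k ℂ) * Matrix.diagonal (fun i => ((d i ^ p : ℝ) : ℂ)) *
      star (U : Matrix k k ℂ) :=
  mfun_conj (fun x => x ^ p) hA U d hAU

lemma mpow_eq {A : Matrix k k ℂ} (hA : A.IsHermitian) (p : ℝ) :
    mpow A p = (hA.eigenvectorUnitary : Matrix k k ℂ) *
      Matrix.diagonal (fun i => ((hA.eigenvalues i ^ p : ℝ) : ℂ)) *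
      star (hA.eigenvectorUnitary : Matrix k k ℂ) :=
  mpow_conj hA _ _ (spectral hA) p

lemma mpow_posDef {A : Matrix k k ℂ} (hA : A.PosDef) (p : ℝ) : (mpow A p).PosDef := by
  rw [mpow_eq hA.1 p]
  exact uconj_posDef _ _ fun i => Real.rpow_pos_of_pos (hA.eigenvalues_pos i) p

lemma mpow_one {A : Matrix k k ℂ} (hA : A.IsHermitian) : mpow A 1 = A := by
  rw [mpow_eq hA 1]
  simp only [Real.rpow_one]
  exact (spectral hA).symm

lemma mpow_mul_mpow {A : Matrix k k ℂ} (hA : A.PosDef) (p q : ℝ) :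
    mpow A p * mpow A q = mpow A (p + q) := by
  rw [mpow_eq hA.1 p, mpow_eq hA.1 q, mpow_eq hA.1 (p + q)]
  have h1 : (fun i => ((hA.1.eigenvalues i ^ (p + q) : ℝ) : ℂ)) =
      fun i => ((hA.1.eigenvalues i ^ p : ℝ) : ℂ) * ((hA.1.eigenvalues i ^ q : ℝ) : ℂ) := by
    funext i
    rw [← Complex.ofReal_mul, ← Real.rpow_add (hA.eigenvalues_pos i)]
  rw [h1, ← Matrix.diagonal_mul_diagonal]
  simp only [mul_assoc, ucancel]

lemma mpow_mpow {A : Matrix k k ℂ} (hA : A.PosDef) (p q : ℝ) :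
    mpow (mpow A p) q = mpow A (p * q) := by
  rw [mpow_conj (mpow_posDef hA p).1 _ _ (mpow_eq hA.1 p) q, mpow_eq hA.1 (p * q)]
  have h1 : (fun i => (((hA.1.eigenvalues i ^ p : ℝ) ^ q : ℝ) : ℂ)) =
      fun i => ((hA.1.eigenvalues i ^ (p * q) : ℝ) : ℂ) := by
    funext i
    rw [← Real.rpow_mul (le_of_lt (hA.eigenvalues_pos i))]
  rw [h1]

end Lemmas

section Kron

open Kronecker

variable {k l : Type*} [Fintype k] [DecidableEq k] [Fintype l] [DecidableEq l]

lemma kron_conjTranspose (A : Matrix k k ℂ) (B : Matrix l l ℂ) :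
    (A ⊗ₖ B)ᴴ = Aᴴ ⊗ₖ Bᴴ := by
  ext ⟨i, j⟩ ⟨i', j'⟩
  simp [Matrix.conjTranspose_apply, Matrix.kroneckerMap_apply]

lemma kron_star (A : Matrix k k ℂ) (B : Matrix l l ℂ) :
    star (A ⊗ₖ B) = star A ⊗ₖ star B := by
  simpa [Matrix.star_eq_conjTranspose] using kron_conjTranspose A B

/-- The Kronecker product of unitaries is unitary. -/
noncomputable def kronUnitary (U : Matrix.unitaryGroup k ℂ) (V : Matrix.unitaryGroup l ℂ) :
    Matrix.unitaryGroup (k × l) ℂ :=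
  ⟨(U : Matrix k k ℂ) ⊗ₖ (V : Matrix l l ℂ), by
    rw [Matrix.mem_unitaryGroup_iff, kron_star, ← Matrix.mul_kronecker_mul,
      mul_star_self', mul_star_self', Matrix.one_kronecker_one]⟩

lemma mpow_kron {A : Matrix k k ℂ} {B : Matrix l l ℂ} (hA : A.PosDef) (hB : B.PosDef)
    (p : ℝ) : mpow (A ⊗ₖ B) p = mpow A p ⊗ₖ mpow B p := by
  set U := hA.1.eigenvectorUnitary
  set V := hB.1.eigenvectorUnitary
  have hdecomp : A ⊗ₖ B = (kronUnitary U V : Matrix (k × l) (k × l) ℂ) *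
      Matrix.diagonal (fun i : k × l => ((hA.1.eigenvalues i.1 * hB.1.eigenvalues i.2 : ℝ) : ℂ)) *
      star (kronUnitary U V : Matrix (k × l) (k × l) ℂ) := by
    conv_lhs => rw [spectral hA.1, spectral hB.1]
    rw [show (kronUnitary U V : Matrix (k × l) (k × l) ℂ) = (U : Matrix k k ℂ) ⊗ₖ (V : Matrix l l ℂ) from rfl,
      kron_star, Matrix.mul_kronecker_mul, Matrix.mul_kronecker_mul,
      Matrix.diagonal_kronecker_diagonal]
    congr 2
    funext i
    push_cast
    ring
  have hherm : (A ⊗ₖ B).IsHermitian := by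
    rw [hdecomp]
    -- it is a unitary conjugate of a real diagonal
    have := uconj_isHermitian (kronUnitary U V)
      (fun i : k × l => hA.1.eigenvalues i.1 * hB.1.eigenvalues i.2)
    exact this
  rw [mpow_conj hherm _ _ hdecomp p, mpow_eq hA.1 p, mpow_eq hB.1 p,
    show (kronUnitary U V : Matrix (k × l) (k × l) ℂ) = (U : Matrix k k ℂ) ⊗ₖ (V : Matrix l l ℂ) from rfl,
    kron_star, Matrix.mul_kronecker_mul, Matrix.mul_kronecker_mul,
    Matrix.diagonal_kronecker_diagonal]
  have hfun : (fun i : k × l => (((hA.1.eigenvalues i.1 * hB.1.eigenvalues i.2) ^ p : ℝ) : ℂ)) =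
      fun mn : k × l => ((hA.1.eigenvalues mn.1 ^ p : ℝ) : ℂ) * ((hB.1.eigenvalues mn.2 ^ p : ℝ) : ℂ) := by
    funext i
    rw [Real.mul_rpow (le_of_lt (hA.eigenvalues_pos i.1)) (le_of_lt (hB.eigenvalues_pos i.2)),
      Complex.ofReal_mul]
  rw [hfun]

end Kron


set_option maxHeartbeats 1000000 in
open Kronecker in
theorem tensor_property {n m : ℕ} (ρ σ : Matrix (Fin n) (Fin n) ℂ)
    (hρ : ρ.PosDef) (hσ : σ.PosDef) (τ : Matrix (Fin m) (Fin m) ℂ) (hτ : τ.PosDef)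
    (α : ℝ) (hα0 : 0 < α) (hα1 : α ≠ 1) :
    (mpow (mpow (σ ⊗ₖ τ) ((1 - α) / (2 * α)) * (ρ ⊗ₖ τ) *
        mpow (σ ⊗ₖ τ) ((1 - α) / (2 * α))) α).trace =
      (mpow (mpow σ ((1 - α) / (2 * α)) * ρ * mpow σ ((1 - α) / (2 * α))) α).trace * τ.trace := by
  have hα : α ≠ 0 := ne_of_gt hα0
  set s : ℝ := (1 - α) / (2 * α) with hs
  rw [mpow_kron hσ hτ]
  have hmid : (mpow σ s ⊗ₖ mpow τ s) * (ρ ⊗ₖ τ) * (mpow σ s ⊗ₖ mpow τ s) =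
      (mpow σ s * ρ * mpow σ s) ⊗ₖ (mpow τ s * τ * mpow τ s) := by
    rw [← Matrix.mul_kronecker_mul, ← Matrix.mul_kronecker_mul]
  rw [hmid]
  have hτs : mpow τ s * τ * mpow τ s = mpow τ (1 / α) := by
    have h1 : mpow τ s * τ * mpow τ s = mpow τ s * mpow τ 1 * mpow τ s := by
      rw [mpow_one hτ.1]
    have h2 : s + 1 + s = 1 / α := by
      rw [hs]; field_simp; ring
    rw [h1, mpow_mul_mpow hτ, mpow_mul_mpow hτ, h2]
  rw [hτs]
  have hX : (mpow σ s * ρ * mpow σ s).PosDef := by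
    have h1 : (mpow σ s).PosDef := mpow_posDef hσ s
    have h2 : mpow σ s * ρ * mpow σ s = (mpow σ s)ᴴ * ρ * mpow σ s := by
      rw [h1.1.eq]
    rw [h2]
    exact conj_posDef hρ _ h1.isUnit
  rw [mpow_kron hX (mpow_posDef hτ (1 / α)), mpow_mpow hτ,
    show 1 / α * α = 1 from one_div_mul_cancel hα, mpow_one hτ.1, Matrix.trace_kronecker]
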